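/- Series representation of the difference of equivariant families: under the hypotheses of Theorem 1, for every ω ∈ Ω_ε ∩ Ω₀ the series Σ_{j=0}^∞ L^j_{σ_ε^{-j}ω,ε}( (L_{σ_ε^{-(j+1)}ω,ε} − L_{σ^{-(j+1)}ω}) h_{σ^{-(j+1)}ω} ) converges in B_w and equals h_{ω,ε} − h_{ω,0}. -/

import Mathlib

/-- The random cocycle L^n_{ω,ε} = L_{σ_ε^{n-1}ω,ε} ∘ ⋯ ∘ L_{ω,ε} (and L⁰ = Id). -/
noncomputable def coc {Ω B : Type*} [NormedAddCommGroup B] [NormedSpace ℝ B]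
    (σ : Ω → Ω) (L : Ω → B →L[ℝ] B) : ℕ → Ω → (B →L[ℝ] B)
  | 0, _ => ContinuousLinearMap.id ℝ B
  | n + 1, ω => (coc σ L n (σ ω)).comp (L ω)

/-- series representation of the difference of equivariant families:
under the hypotheses of Theorem 1, the series
Σ_j L^j_{σ_ε^{-j}ω,ε}((L_{σ_ε^{-(j+1)}ω,ε} − L_{σ^{-(j+1)}ω}) h_{σ^{-(j+1)}ω})
converges in B_w to h_{ω,ε} − h_{ω,0}. -/
theorem stmt6 {Ω Bw Bs : Type*} [MetricSpace Ω] [Nonempty Ω]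
    [NormedAddCommGroup Bw] [NormedSpace ℝ Bw] [CompleteSpace Bw]
    [NormedAddCommGroup Bs] [NormedSpace ℝ Bs]
    (ι : Bs →L[ℝ] Bw) (hι : ∀ g : Bs, ‖ι g‖ ≤ ‖g‖)
    (ψ : Bw →L[ℝ] ℝ) (hψ : ψ ≠ 0)
    (I : Set ℝ) (hI : (0 : ℝ) ∈ I)
    (σ : ℝ → Ω ≃ Ω) (Ωe : ℝ → Set Ω)
    (hinv : ∀ ε ∈ I, ∀ ω ∈ Ωe ε, (σ ε).symm ω ∈ Ωe ε ∧ (σ ε) ω ∈ Ωe ε)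
    (L : ℝ → Ω → Bw →L[ℝ] Bw) (h : ℝ → Ω → Bs)
    (C lam ζ c D₀ : ℝ) (hC : 0 < C) (hlam : 0 < lam) (hζ : 0 < ζ) (hζ1 : ζ ≤ 1)
    (hc : 0 ≤ c)
    (hbdd : ∀ x y : Ω, dist x y ≤ D₀)
    (hpres : ∀ ε ∈ I, ∀ (ω : Ω) (g : Bw), ψ (L ε ω g) = ψ g)
    (hdec : ∀ ε ∈ I, ∀ ω ∈ Ωe ε, ∀ (n : ℕ) (g : Bw), ψ g = 0 →
      ‖coc (⇑(σ ε)) (L ε) n ω g‖ ≤ C * Real.exp (-lam * n) * ‖g‖)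
    (hcont : ∀ ε ∈ I, ∀ ω ∈ Ωe ε, ∀ ω' ∈ Ωe 0, ∀ g : Bs,
      ‖L ε ω (ι g) - L 0 ω' (ι g)‖ ≤ C * (dist ω ω' ^ ζ + |ε| ^ ζ) * ‖g‖)
    (hnorm : ∀ ε ∈ I, ∀ ω ∈ Ωe ε, ψ (ι (h ε ω)) = 1 ∧ ‖h ε ω‖ ≤ C)
    (hequiv : ∀ ε ∈ I, ∀ ω ∈ Ωe ε, L ε ω (ι (h ε ω)) = ι (h ε ((σ ε) ω)))
    (hLip : ∀ x y : Ω, dist ((σ 0).symm x) ((σ 0).symm y) ≤ Real.exp c * dist x y) :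
    ∀ ε ∈ I, ∀ ω ∈ Ωe ε ∩ Ωe 0,
      HasSum (fun j : ℕ =>
        coc (⇑(σ ε)) (L ε) j ((σ ε).symm^[j] ω)
          ((L ε ((σ ε).symm^[j + 1] ω) - L 0 ((σ 0).symm^[j + 1] ω))
            (ι (h 0 ((σ 0).symm^[j + 1] ω)))))
        (ι (h ε ω) - ι (h 0 ω)) := by

  intro ε hε ω hω
  obtain ⟨hωε, hω0⟩ := hω
  have hΩε : ∀ j : ℕ, (σ ε).symm^[j] ω ∈ Ωe ε := by
    intro j; induction j with
    | zero => simpa using hωε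
    | succ n ih =>
      rw [Function.iterate_succ_apply']
      exact (hinv ε hε _ ih).1
  have hΩ0 : ∀ j : ℕ, (σ 0).symm^[j] ω ∈ Ωe 0 := by
    intro j; induction j with
    | zero => simpa using hω0
    | succ n ih =>
      rw [Function.iterate_succ_apply']
      exact (hinv 0 hI _ ih).1
  have ha : ∀ j : ℕ, (σ ε) ((σ ε).symm^[j+1] ω) = (σ ε).symm^[j] ω := by
    intro j; rw [Function.iterate_succ_apply']; exact (σ ε).apply_symm_apply _
  have hb : ∀ j : ℕ, (σ 0) ((σ 0).symm^[j+1] ω) = (σ 0).symm^[j] ω := by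
    intro j; rw [Function.iterate_succ_apply']; exact (σ 0).apply_symm_apply _
  set f : ℕ → Bw := fun j : ℕ =>
    coc (⇑(σ ε)) (L ε) j ((σ ε).symm^[j] ω)
      ((L ε ((σ ε).symm^[j + 1] ω) - L 0 ((σ 0).symm^[j + 1] ω))
        (ι (h 0 ((σ 0).symm^[j + 1] ω)))) with hf
  set g : ℕ → Bw := fun j : ℕ =>
    coc (⇑(σ ε)) (L ε) j ((σ ε).symm^[j] ω) (ι (h 0 ((σ 0).symm^[j] ω))) with hg
  have hstep : ∀ j : ℕ, f j = g (j+1) - g j := by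
    intro j
    have heq0 : L 0 ((σ 0).symm^[j+1] ω) (ι (h 0 ((σ 0).symm^[j+1] ω)))
        = ι (h 0 ((σ 0).symm^[j] ω)) := by
      rw [hequiv 0 hI _ (hΩ0 (j+1)), hb]
    simp only [hf, hg, coc, ContinuousLinearMap.coe_comp', Function.comp_apply, ha,
      ContinuousLinearMap.sub_apply, map_sub, heq0]
  have hg0 : g 0 = ι (h 0 ω) := by simp [hg, coc]
  have hpart : ∀ n : ℕ, ∑ j ∈ Finset.range n, f j = g n - ι (h 0 ω) := by
    intro n
    rw [Finset.sum_congr rfl fun j _ => hstep j, Finset.sum_range_sub g n, hg0]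
  have hfix : ∀ n : ℕ,
      coc (⇑(σ ε)) (L ε) n ((σ ε).symm^[n] ω) (ι (h ε ((σ ε).symm^[n] ω)))
        = ι (h ε ω) := by
    intro n; induction n with
    | zero => simp [coc]
    | succ n ih =>
      have heq : L ε ((σ ε).symm^[n+1] ω) (ι (h ε ((σ ε).symm^[n+1] ω)))
          = ι (h ε ((σ ε).symm^[n] ω)) := by
        rw [hequiv ε hε _ (hΩε (n+1)), ha]
      simpa only [coc, ContinuousLinearMap.coe_comp', Function.comp_apply, ha, heq] using ih
  -- convergence of g to ι (h ε ω)
  have hgtend : Filter.Tendsto g Filter.atTop (nhds (ι (h ε ω))) := by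
    have hbound : ∀ n : ℕ, ‖g n - ι (h ε ω)‖ ≤ (C * (2*C)) * Real.exp (-lam) ^ n := by
      intro n
      have hψ0 : ψ (ι (h 0 ((σ 0).symm^[n] ω)) - ι (h ε ((σ ε).symm^[n] ω))) = 0 := by
        rw [map_sub, (hnorm 0 hI _ (hΩ0 n)).1, (hnorm ε hε _ (hΩε n)).1, sub_self]
      have hrepr : g n - ι (h ε ω)
          = coc (⇑(σ ε)) (L ε) n ((σ ε).symm^[n] ω)
              (ι (h 0 ((σ 0).symm^[n] ω)) - ι (h ε ((σ ε).symm^[n] ω))) := by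
        rw [map_sub, hfix n]
      have h1 := hdec ε hε _ (hΩε n) n _ hψ0
      have h2 : ‖ι (h 0 ((σ 0).symm^[n] ω)) - ι (h ε ((σ ε).symm^[n] ω))‖ ≤ 2 * C := by
        calc ‖ι (h 0 ((σ 0).symm^[n] ω)) - ι (h ε ((σ ε).symm^[n] ω))‖
            ≤ ‖ι (h 0 ((σ 0).symm^[n] ω))‖ + ‖ι (h ε ((σ ε).symm^[n] ω))‖ := norm_sub_le _ _
          _ ≤ C + C := add_le_add
              (le_trans (hι _) (hnorm 0 hI _ (hΩ0 n)).2)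
              (le_trans (hι _) (hnorm ε hε _ (hΩε n)).2)
          _ = 2 * C := by ring
      rw [hrepr]
      calc ‖coc (⇑(σ ε)) (L ε) n ((σ ε).symm^[n] ω)
              (ι (h 0 ((σ 0).symm^[n] ω)) - ι (h ε ((σ ε).symm^[n] ω)))‖
          ≤ C * Real.exp (-lam * n) * ‖ι (h 0 ((σ 0).symm^[n] ω)) - ι (h ε ((σ ε).symm^[n] ω))‖ := h1
        _ ≤ C * Real.exp (-lam * n) * (2 * C) := by
            have : (0:ℝ) ≤ C * Real.exp (-lam * n) := by positivity
            exact mul_le_mul_of_nonneg_left h2 this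
        _ = (C * (2*C)) * Real.exp (-lam) ^ n := by
            rw [← Real.exp_nat_mul, mul_comm (n:ℝ) (-lam)]; ring
    have hmaj : Filter.Tendsto (fun n : ℕ => (C * (2*C)) * Real.exp (-lam) ^ n)
        Filter.atTop (nhds 0) := by
      have := tendsto_pow_atTop_nhds_zero_of_lt_one (le_of_lt (Real.exp_pos (-lam)))
        ((Real.exp_lt_one_iff.mpr (neg_lt_zero.mpr hlam)))
      simpa using this.const_mul (C * (2*C))
    have : Filter.Tendsto (fun n => ‖g n - ι (h ε ω)‖) Filter.atTop (nhds 0) :=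
      squeeze_zero (fun n => norm_nonneg _) hbound hmaj
    rw [← tendsto_sub_nhds_zero_iff]
    exact tendsto_zero_iff_norm_tendsto_zero.mpr this
  have htend : Filter.Tendsto (fun n : ℕ => ∑ j ∈ Finset.range n, f j)
      Filter.atTop (nhds (ι (h ε ω) - ι (h 0 ω))) := by
    simp only [hpart]
    exact hgtend.sub tendsto_const_nhds
  -- summability
  have hD0 : (0:ℝ) ≤ D₀ := le_trans dist_nonneg (hbdd ω ω)
  have hK : (0:ℝ) ≤ C * (D₀ ^ ζ + |ε| ^ ζ) * C := by positivity
  have hsum : Summable f := by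
    apply Summable.of_norm_bounded
      (g := fun j : ℕ => (C * (C * (D₀ ^ ζ + |ε| ^ ζ) * C)) * Real.exp (-lam) ^ j)
      (Summable.mul_left _ (summable_geometric_of_lt_one (le_of_lt (Real.exp_pos _))
        ((Real.exp_lt_one_iff.mpr (neg_lt_zero.mpr hlam)))))
    intro j
    set a := (σ ε).symm^[j+1] ω
    set b := (σ 0).symm^[j+1] ω
    have hψv : ψ ((L ε a - L 0 b) (ι (h 0 b))) = 0 := by
      rw [ContinuousLinearMap.sub_apply, map_sub, hpres ε hε a _, hpres 0 hI b _, sub_self]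
    have h1 := hdec ε hε _ (hΩε j) j _ hψv
    have h2 : ‖(L ε a - L 0 b) (ι (h 0 b))‖ ≤ C * (D₀ ^ ζ + |ε| ^ ζ) * C := by
      calc ‖(L ε a - L 0 b) (ι (h 0 b))‖
          = ‖L ε a (ι (h 0 b)) - L 0 b (ι (h 0 b))‖ := by rw [ContinuousLinearMap.sub_apply]
        _ ≤ C * (dist a b ^ ζ + |ε| ^ ζ) * ‖h 0 b‖ :=
            hcont ε hε a (hΩε (j+1)) b (hΩ0 (j+1)) _
        _ ≤ C * (D₀ ^ ζ + |ε| ^ ζ) * C := by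
            have hd : dist a b ^ ζ ≤ D₀ ^ ζ :=
              Real.rpow_le_rpow dist_nonneg (hbdd a b) (le_of_lt hζ)
            apply mul_le_mul
            · apply mul_le_mul_of_nonneg_left _ (le_of_lt hC)
              exact add_le_add_left hd _
            · exact (hnorm 0 hI _ (hΩ0 (j+1))).2
            · exact norm_nonneg _
            · positivity
    calc ‖f j‖ ≤ C * Real.exp (-lam * j) * ‖(L ε a - L 0 b) (ι (h 0 b))‖ := h1
      _ ≤ C * Real.exp (-lam * j) * (C * (D₀ ^ ζ + |ε| ^ ζ) * C) := by
          have : (0:ℝ) ≤ C * Real.exp (-lam * j) := by positivity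
          exact mul_le_mul_of_nonneg_left h2 this
      _ = (C * (C * (D₀ ^ ζ + |ε| ^ ζ) * C)) * Real.exp (-lam) ^ j := by
          rw [← Real.exp_nat_mul, mul_comm (j:ℝ) (-lam)]; ring
  obtain ⟨S, hS⟩ := hsum
  have := tendsto_nhds_unique hS.tendsto_sum_nat htend
  rwa [this] at hS
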